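/- arXiv:2012.13766 — 5 statements merged into one kernel-verified Lean document; each statement's English description precedes it below -/
import Mathlib

section
/- Let γ and p be vectors of Rademacher-perturbation amplitudes and base probabilities with 0 ≤ γ_i ≤ p_i ≤ 1/2 for i = 1,...,N, let n ∈ ℕ, and consider the mixture distribution over observations obtained by drawing δ ∈ {±1}^N uniformly and then drawing n independent samples from ⊗_i Bernoulli(p_i + δ_i γ_i). Then the chi-square divergence of this mixture from (⊗_i Bernoulli(p_i))^{⊗n} satisfies 1 + χ² = Π_{i=1}^N [½(1 + γ_i²/(p_i(1-p_i)))^n + ½(1 - γ_i²/(p_i(1-p_i)))^n] ≤ exp(Σ_{i=1}^N n²γ_i⁴/(2 p_i²(1-p_i)²)). -/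
open Real Finset

lemma prod_div_prod_of {κ : Type*} (s : Finset κ) (f g : κ → ℝ)
    (h : ∀ k ∈ s, g k = 0 → f k = 0) :
    (∏ k ∈ s, f k) / (∏ k ∈ s, g k) = ∏ k ∈ s, f k / g k := by
  by_cases hg : ∀ k ∈ s, g k ≠ 0
  · rw [← Finset.prod_div_distrib]
  · push_neg at hg
    obtain ⟨k, hk, hgk⟩ := hg
    rw [Finset.prod_eq_zero hk (h k hk hgk), zero_div,
      Finset.prod_eq_zero hk (show f k / g k = 0 by rw [h k hk hgk, zero_div])]

lemma prod2_div_prod2 {ι κ : Type*} [Fintype ι] [Fintype κ] (f g : ι → κ → ℝ)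
    (h : ∀ i j, g i j = 0 → f i j = 0) :
    (∏ i, ∏ j, f i j) / (∏ i, ∏ j, g i j) = ∏ i, ∏ j, f i j / g i j := by
  rw [← Finset.prod_product', ← Finset.prod_product', ← Finset.prod_product',
    prod_div_prod_of]
  exact fun k _ => h k.1 k.2

lemma cell (pj γj e e' : ℝ) (h : pj = 0 → γj = 0) (h1 : pj < 1) :
    (pj + e * γj) * (pj + e' * γj) / pj
      + (1 - (pj + e * γj)) * (1 - (pj + e' * γj)) / (1 - pj)
      = 1 + (e * e') * (γj ^ 2 / (pj * (1 - pj))) := by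
  rcases eq_or_ne pj 0 with h0 | h0
  · simp [h0, h h0]
  · have h1' : (1 : ℝ) - pj ≠ 0 := by intro hh; nlinarith
    field_simp
    ring

lemma sum_prod_eval {κ : Type*} [Fintype κ] [DecidableEq κ] (h : κ → Bool → ℝ) :
    ∑ δ : κ → Bool, ∏ j, h j (δ j) = ∏ j, (h j true + h j false) := by
  rw [← Fintype.prod_sum (fun (j : κ) (b : Bool) => h j b)]
  exact Finset.prod_congr rfl fun j _ => by simp [add_comm]

lemma half_pow_bound (t : ℝ) (n : ℕ) (h0 : 0 ≤ t) (h1 : t ≤ 1) :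
    (1/2) * (1+t)^n + (1/2) * (1-t)^n ≤ Real.exp ((n:ℝ)^2 * t^2 / 2) := by
  have ha : (1+t)^n ≤ Real.exp ((n:ℝ) * t) := by
    calc (1+t)^n ≤ (Real.exp t)^n :=
          pow_le_pow_left₀ (by linarith) (by linarith [Real.add_one_le_exp t]) n
      _ = Real.exp ((n:ℝ) * t) := by rw [← Real.exp_nat_mul]
  have hb : (1-t)^n ≤ Real.exp (-((n:ℝ) * t)) := by
    calc (1-t)^n ≤ (Real.exp (-t))^n :=
          pow_le_pow_left₀ (by linarith) (by linarith [Real.add_one_le_exp (-t)]) n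
      _ = Real.exp (-((n:ℝ) * t)) := by rw [← Real.exp_nat_mul]; ring_nf
  calc (1/2)*(1+t)^n + (1/2)*(1-t)^n
      ≤ (1/2)*Real.exp ((n:ℝ)*t) + (1/2)*Real.exp (-((n:ℝ)*t)) := by linarith
    _ = Real.cosh ((n:ℝ)*t) := by rw [Real.cosh_eq]; ring
    _ ≤ Real.exp (((n:ℝ)*t)^2/2) := Real.cosh_le_exp_half_sq _
    _ = Real.exp ((n:ℝ)^2 * t^2 / 2) := by ring_nf

/-- The chi-square computation for the Rademacher-perturbation mixture: with
`P X = ∏ (Bernoulli p)` the null likelihood of the `n` samples `X` and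
`Q_δ X` the likelihood under parameters `p + δ * γ`, the quantity
`1 + χ²(mixture ‖ null) = ∑_X (𝔼_δ Q_δ X)² / P X` equals the explicit product
and is bounded by the exponential of the fourth-moment sum. -/
theorem chi_square_mixture_bound (N n : ℕ) (γ p : Fin N → ℝ)
    (hγ0 : ∀ i, 0 ≤ γ i) (hγp : ∀ i, γ i ≤ p i) (hp : ∀ i, p i ≤ 1 / 2) :
    (∑ X : Fin n → Fin N → Bool,
        ((1 / 2 ^ N : ℝ) * ∑ δ : Fin N → Bool, ∏ i, ∏ j,
            (if X i j then p j + (if δ j then 1 else -1) * γ j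
              else 1 - (p j + (if δ j then 1 else -1) * γ j))) ^ 2
          / ∏ i, ∏ j, (if X i j then p j else 1 - p j))
      = ∏ i, ((1 / 2) * (1 + γ i ^ 2 / (p i * (1 - p i))) ^ n
          + (1 / 2) * (1 - γ i ^ 2 / (p i * (1 - p i))) ^ n) ∧
    ∏ i, ((1 / 2) * (1 + γ i ^ 2 / (p i * (1 - p i))) ^ n
        + (1 / 2) * (1 - γ i ^ 2 / (p i * (1 - p i))) ^ n) ≤
      Real.exp (∑ i, (n : ℝ) ^ 2 * γ i ^ 4 / (2 * p i ^ 2 * (1 - p i) ^ 2)) := by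
  have hp0 : ∀ j, 0 ≤ p j := fun j => (hγ0 j).trans (hγp j)
  have h1p : ∀ j, (0:ℝ) < 1 - p j := fun j => by linarith [hp j]
  have hz : ∀ j, p j = 0 → γ j = 0 := fun j hj =>
    le_antisymm (hj ▸ hγp j) (hγ0 j)
  set τ : Fin N → ℝ := fun j => γ j ^ 2 / (p j * (1 - p j)) with hτdef
  have hτ0 : ∀ j, 0 ≤ τ j := fun j =>
    div_nonneg (sq_nonneg _) (mul_nonneg (hp0 j) (h1p j).le)
  have hτ1 : ∀ j, τ j ≤ 1 := by
    intro j
    show γ j ^ 2 / (p j * (1 - p j)) ≤ 1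
    rcases eq_or_ne (p j) 0 with h0 | h0
    · simp [h0]
    · have hpj : 0 < p j := (hp0 j).lt_of_ne (Ne.symm h0)
      exact div_le_one_of_le₀ (by nlinarith [hγp j, hγ0 j, hp j])
        (mul_nonneg (hp0 j) (h1p j).le)
  constructor
  · -- the identity
    have key1 : ∀ X : Fin n → Fin N → Bool,
        ((1 / 2 ^ N : ℝ) * ∑ δ : Fin N → Bool, ∏ i, ∏ j,
            (if X i j then p j + (if δ j then 1 else -1) * γ j
              else 1 - (p j + (if δ j then 1 else -1) * γ j))) ^ 2
          / ∏ i, ∏ j, (if X i j then p j else 1 - p j)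
        = (1 / 2 ^ N : ℝ) ^ 2 * ∑ δ : Fin N → Bool, ∑ δ' : Fin N → Bool,
            ∏ i, ∏ j,
              ((if X i j then p j + (if δ j then 1 else -1) * γ j
                  else 1 - (p j + (if δ j then 1 else -1) * γ j))
                * (if X i j then p j + (if δ' j then 1 else -1) * γ j
                  else 1 - (p j + (if δ' j then 1 else -1) * γ j))
                / (if X i j then p j else 1 - p j)) := by
      intro X
      rw [mul_pow, sq (∑ δ : Fin N → Bool, _), Finset.sum_mul_sum, mul_div_assoc]
      congr 1
      rw [Finset.sum_div]
      refine Finset.sum_congr rfl fun δ _ => ?_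
      rw [Finset.sum_div]
      refine Finset.sum_congr rfl fun δ' _ => ?_
      rw [← Finset.prod_mul_distrib]
      simp_rw [← Finset.prod_mul_distrib]
      rw [prod2_div_prod2]
      intro i j hij
      by_cases hx : X i j
      · simp only [hx, if_true] at hij ⊢
        rw [hij, hz j hij]
        ring
      · simp only [hx, if_false] at hij ⊢
        exact absurd hij (h1p j).ne'
    calc (∑ X : Fin n → Fin N → Bool,
        ((1 / 2 ^ N : ℝ) * ∑ δ : Fin N → Bool, ∏ i, ∏ j,
            (if X i j then p j + (if δ j then 1 else -1) * γ j
              else 1 - (p j + (if δ j then 1 else -1) * γ j))) ^ 2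
          / ∏ i, ∏ j, (if X i j then p j else 1 - p j))
        = (1 / 2 ^ N : ℝ) ^ 2 * ∑ δ : Fin N → Bool, ∑ δ' : Fin N → Bool,
            ∑ X : Fin n → Fin N → Bool, ∏ i, ∏ j,
              ((if X i j then p j + (if δ j then 1 else -1) * γ j
                  else 1 - (p j + (if δ j then 1 else -1) * γ j))
                * (if X i j then p j + (if δ' j then 1 else -1) * γ j
                  else 1 - (p j + (if δ' j then 1 else -1) * γ j))
                / (if X i j then p j else 1 - p j)) := by
          rw [Finset.sum_congr rfl fun X _ => key1 X, ← Finset.mul_sum]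
          congr 1
          rw [Finset.sum_comm]
          exact Finset.sum_congr rfl fun δ _ => Finset.sum_comm
      _ = (1 / 2 ^ N : ℝ) ^ 2 * ∑ δ : Fin N → Bool, ∑ δ' : Fin N → Bool,
            ∏ j, (1 + ((if δ j then (1:ℝ) else -1) * (if δ' j then (1:ℝ) else -1))
              * τ j) ^ n := by
          congr 1
          refine Finset.sum_congr rfl fun δ _ => Finset.sum_congr rfl fun δ' _ => ?_
          rw [← Fintype.prod_sum
            (fun (_ : Fin n) (Y : Fin N → Bool) => ∏ j,
              ((if Y j then p j + (if δ j then (1:ℝ) else -1) * γ j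
                  else 1 - (p j + (if δ j then 1 else -1) * γ j))
                * (if Y j then p j + (if δ' j then 1 else -1) * γ j
                  else 1 - (p j + (if δ' j then 1 else -1) * γ j))
                / (if Y j then p j else 1 - p j)))]
          rw [Finset.prod_const, Finset.card_univ, Fintype.card_fin]
          rw [sum_prod_eval (fun j x =>
              ((if x then p j + (if δ j then (1:ℝ) else -1) * γ j
                  else 1 - (p j + (if δ j then 1 else -1) * γ j))
                * (if x then p j + (if δ' j then 1 else -1) * γ j
                  else 1 - (p j + (if δ' j then 1 else -1) * γ j))
                / (if x then p j else 1 - p j)))]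
          rw [← Finset.prod_pow]
          refine Finset.prod_congr rfl fun j _ => ?_
          congr 1
          simp only [↓reduceIte]
          exact cell (p j) (γ j) _ _ (hz j) (by linarith [hp j])
      _ = (1 / 2 ^ N : ℝ) ^ 2 * ∑ δ : Fin N → Bool,
            ∏ j, ((1 + τ j) ^ n + (1 - τ j) ^ n) := by
          congr 1
          refine Finset.sum_congr rfl fun δ _ => ?_
          rw [sum_prod_eval (fun j b =>
            (1 + ((if δ j then (1:ℝ) else -1) * (if b then (1:ℝ) else -1)) * τ j) ^ n)]
          refine Finset.prod_congr rfl fun j _ => ?_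
          by_cases hδ : δ j <;> simp [hδ] <;> ring_nf
      _ = ∏ j, ((1 / 2) * (1 + τ j) ^ n + (1 / 2) * (1 - τ j) ^ n) := by
          rw [Finset.sum_const, Finset.card_univ]
          have hcard : Fintype.card (Fin N → Bool) = 2 ^ N := by
            simp [Fintype.card_fun]
          rw [hcard, nsmul_eq_mul]
          have he : ∀ j : Fin N, (1 / 2 : ℝ) * (1 + τ j) ^ n + (1 / 2) * (1 - τ j) ^ n
              = (1/2) * ((1 + τ j) ^ n + (1 - τ j) ^ n) := fun j => by ring
          rw [Finset.prod_congr rfl fun j _ => he j, Finset.prod_mul_distrib,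
            Finset.prod_const, Finset.card_univ, Fintype.card_fin]
          push_cast
          have h2 : (2:ℝ) ^ N ≠ 0 := by positivity
          field_simp
          rw [one_div, inv_pow, mul_comm (2 ^ N : ℝ), mul_assoc, mul_inv_cancel₀ h2, mul_one]
  · -- the inequality
    rw [Real.exp_sum]
    refine Finset.prod_le_prod (fun j _ => ?_) (fun j _ => ?_)
    · have h1 : (0:ℝ) ≤ 1 + τ j := by linarith [hτ0 j]
      have h2 : (0:ℝ) ≤ 1 - τ j := by linarith [hτ1 j]
      have := pow_nonneg h1 n
      have := pow_nonneg h2 n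
      show (0:ℝ) ≤ (1/2) * (1 + τ j)^n + (1/2) * (1 - τ j)^n
      linarith
    · have hb := half_pow_bound (τ j) n (hτ0 j) (hτ1 j)
      have heq : (n:ℝ)^2 * (τ j)^2 / 2
          = (n:ℝ)^2 * γ j ^ 4 / (2 * p j ^ 2 * (1 - p j) ^ 2) := by
        show (n:ℝ)^2 * (γ j ^ 2 / (p j * (1 - p j)))^2 / 2 = _
        rcases eq_or_ne (p j) 0 with h0 | h0
        · simp [h0, hz j h0]
        · have h1 : (1:ℝ) - p j ≠ 0 := (h1p j).ne'
          field_simp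
      show (1/2) * (1 + τ j)^n + (1/2) * (1 - τ j)^n ≤ _
      rw [← heq]
      exact hb
end

section
/- Let p ∈ [0,1]^N with p_1 ≥ p_2 ≥ ... ≥ p_N ≥ 0, n ≥ 2, and constants 0 < c_I ≤ c_u < 1. Let I = min{J : Σ_{i>J} p_i² ≤ c_I/n²} and let U > I be the smallest index such that n²·p_U·Σ_{i≥U} p_i ≤ c_u. Then either Σ_{i≥U} p_i ≥ (1/3)·Σ_{i>I} p_i, or Σ_{i>I} p_i ≤ Σ_{i≥U} p_i + √(c_I)/n. In particular, Σ_{i≥U} p_i + 1/n and Σ_{i>I} p_i + 1/n agree up to absolute multiplicative constants. -/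
open Real Finset

/-- Comparison of the tail cutoffs `I` and `U` (entries `p 1 ≥ ... ≥ p N ≥ 0`). -/
theorem I_and_U (N n I U : ℕ) (p : ℕ → ℝ) (c_I c_u : ℝ)
    (hmono : ∀ i j, 1 ≤ i → i ≤ j → j ≤ N → p j ≤ p i)
    (hnn : ∀ i, 0 ≤ p i) (hn : 2 ≤ n)
    (hcI : 0 < c_I) (hcIu : c_I ≤ c_u) (hcu : c_u < 1)
    (hI1 : ∑ i ∈ Icc (I + 1) N, (p i) ^ 2 ≤ c_I / (n : ℝ) ^ 2)
    (hI2 : ∀ J, J < I → ¬ (∑ i ∈ Icc (J + 1) N, (p i) ^ 2 ≤ c_I / (n : ℝ) ^ 2))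
    (hUI : I < U) (hUN : U ≤ N)
    (hU1 : (n : ℝ) ^ 2 * p U * ∑ i ∈ Icc U N, p i ≤ c_u)
    (hU2 : ∀ V, I < V → V < U → ¬ ((n : ℝ) ^ 2 * p V * ∑ i ∈ Icc V N, p i ≤ c_u)) :
    (∑ i ∈ Icc U N, p i ≥ (1 / 3) * ∑ i ∈ Icc (I + 1) N, p i ∨
      ∑ i ∈ Icc (I + 1) N, p i ≤ ∑ i ∈ Icc U N, p i + Real.sqrt c_I / n) ∧
    (∑ i ∈ Icc U N, p i + 1 / n ≤ ∑ i ∈ Icc (I + 1) N, p i + 1 / n) ∧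
    (∑ i ∈ Icc (I + 1) N, p i + 1 / n ≤ 3 * (∑ i ∈ Icc U N, p i + 1 / n)) := by
  have hn0 : (0:ℝ) < n := by
    have : (2:ℝ) ≤ n := by exact_mod_cast hn
    linarith
  have hn2 : (0:ℝ) < (n:ℝ)^2 := by positivity
  have hU1' : 1 ≤ U := Nat.one_le_iff_ne_zero.mpr (by omega)
  set A := ∑ i ∈ Icc (I + 1) N, p i with hAdef
  set B := ∑ i ∈ Icc U N, p i with hBdef
  set M := ∑ i ∈ Icc (I + 1) (U - 1), p i with hMdef
  -- A = M + B
  have hsplit : M + B = A := by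
    rw [hAdef, hBdef, hMdef, Finset.Icc_add_one_left_eq_Ioc, Finset.Icc_add_one_left_eq_Ioc,
      show U = U - 1 + 1 by omega, Finset.Icc_add_one_left_eq_Ioc]
    exact Finset.sum_Ioc_consecutive p (by omega) (by omega)
  have hBnn : 0 ≤ B := Finset.sum_nonneg fun i _ => hnn i
  have hMnn : 0 ≤ M := Finset.sum_nonneg fun i _ => hnn i
  have hsq : Real.sqrt c_I < 1 := by
    rw [show (1:ℝ) = Real.sqrt 1 from (Real.sqrt_one).symm]
    exact Real.sqrt_lt_sqrt hcI.le (lt_of_le_of_lt hcIu hcu)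
  have hsqpos : 0 < Real.sqrt c_I := Real.sqrt_pos.mpr hcI
  -- key dichotomy
  have key : M ≤ Real.sqrt c_I / n ∨ M ≤ 2 * B := by
    by_cases hUe : U = I + 1
    · left
      have : M = 0 := by
        rw [hMdef, hUe]
        simp
      rw [this]; positivity
    · -- U ≥ I + 2
      have hUI2 : I + 2 ≤ U := by omega
      by_contra hcon
      push_neg at hcon
      obtain ⟨h1, h2⟩ := hcon
      set x := p (U - 1) with hxdef
      have hxnn : 0 ≤ x := hnn _
      -- x ≤ p i on the middle block, and squares bound
      have hxle : ∀ i ∈ Icc (I + 1) (U - 1), x ≤ p i := by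
        intro i hi
        rw [Finset.mem_Icc] at hi
        exact hmono i (U - 1) (by omega) hi.2 (by omega)
      have hsub : Icc (I + 1) (U - 1) ⊆ Icc (I + 1) N := by
        apply Finset.Icc_subset_Icc_right; omega
      have hsq2 : ∑ i ∈ Icc (I + 1) (U - 1), (p i)^2 ≤ c_I / (n:ℝ)^2 := by
        refine le_trans (Finset.sum_le_sum_of_subset_of_nonneg hsub ?_) hI1
        intro i _ _; positivity
      have hMx : M * x ≤ c_I / (n:ℝ)^2 := by
        rw [hMdef, Finset.sum_mul]
        refine le_trans (le_trans (Finset.sum_le_sum ?_) hsq2) le_rfl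
        intro i hi
        have := hxle i hi
        have := hnn i
        nlinarith
      have hKx : ((U - 1 - I : ℕ) : ℝ) * x^2 ≤ c_I / (n:ℝ)^2 := by
        calc ((U - 1 - I : ℕ) : ℝ) * x^2
            = ∑ _i ∈ Icc (I + 1) (U - 1), x^2 := by
              rw [Finset.sum_const, Nat.card_Icc, nsmul_eq_mul]
              congr 2; omega
          _ ≤ ∑ i ∈ Icc (I + 1) (U - 1), (p i)^2 := by
              refine Finset.sum_le_sum fun i hi => ?_
              have := hxle i hi
              nlinarith
          _ ≤ c_I / (n:ℝ)^2 := hsq2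
      -- minimality of U at V = U - 1
      have hV := hU2 (U - 1) (by omega) (by omega)
      push_neg at hV
      have hIccU : Icc U N = Ioc (U - 1) N := by
        conv_lhs => rw [show U = U - 1 + 1 by omega]
        exact Finset.Icc_add_one_left_eq_Ioc _ _
      have hsum : ∑ i ∈ Icc (U - 1) N, p i = x + B := by
        rw [hBdef, hIccU, Finset.Icc_eq_cons_Ioc (by omega : U - 1 ≤ N),
          Finset.sum_cons]
      rw [hsum, ← hxdef] at hV
      have hxB : c_u / (n:ℝ)^2 < x^2 + x * B := by
        rw [div_lt_iff₀ hn2]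
        nlinarith [hV]
      -- derive x² > (c_I/n²)/2
      have hcu' : c_I / (n:ℝ)^2 ≤ c_u / (n:ℝ)^2 := by gcongr
      have hxB2 : x * B ≤ (c_I / (n:ℝ)^2) / 2 := by
        have h3 := mul_le_mul_of_nonneg_left h2.le hxnn
        have h4 : x * (2 * B) = 2 * (x * B) := by ring
        have h5 : x * M = M * x := by ring
        linarith
      have hx2 : (c_I / (n:ℝ)^2) / 2 < x^2 := by linarith
      -- hence U - 1 - I = 1, i.e. the middle block is a single term
      have hK1 : U - 1 - I = 1 := by
        by_contra hK
        have hK2 : 2 ≤ U - 1 - I := by omega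
        have h2K : (2:ℝ) ≤ ((U - 1 - I : ℕ) : ℝ) := by exact_mod_cast hK2
        have h6 := mul_le_mul_of_nonneg_right h2K (sq_nonneg x)
        linarith
      have hMeq : M = x := by
        rw [hMdef, show U - 1 = I + 1 by omega, Finset.Icc_self,
          Finset.sum_singleton, hxdef, show U - 1 = I + 1 by omega]
      -- contradiction with M > √c_I / n
      have hM2 : c_I / (n:ℝ)^2 < M^2 := by
        have h1' : Real.sqrt c_I / n < M := h1
        have h7 : (Real.sqrt c_I / n)^2 < M^2 :=
          pow_lt_pow_left₀ h1' (by positivity) (by norm_num)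
        calc c_I / (n:ℝ)^2 = (Real.sqrt c_I / n)^2 := by
              rw [div_pow, Real.sq_sqrt hcI.le]
          _ < M^2 := h7
      have h8 : M * x = M^2 := by rw [hMeq]; ring
      linarith
  have hBA : B ≤ A := by
    rw [hAdef, hBdef]
    refine Finset.sum_le_sum_of_subset_of_nonneg ?_ fun i _ _ => hnn i
    apply Finset.Icc_subset_Icc_left; omega
  have hfirst : B ≥ (1 / 3) * A ∨ A ≤ B + Real.sqrt c_I / n := by
    rcases key with h | h
    · right; linarith
    · left; linarith
  have hinv : (0:ℝ) < 1 / n := by positivity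
  refine ⟨hfirst, by linarith, ?_⟩
  rcases hfirst with h | h
  · linarith
  · have hle : Real.sqrt c_I / n ≤ 1 / n := by gcongr
    linarith
end

section
/- Let t ∈ [1,2], r = 2t/(4-t), and let p'_1 ≥ ... ≥ p'_N ≥ 0 be reals. Suppose indices A < I ≤ N satisfy (Σ_{i≥I} p'_i²)^{2-r} ≥ c for an absolute constant c ≥ 1 (tail second moment large at I) and (p'_{A+1})^{2-r}·Σ_{i≤I} (p'_i)^r ≤ 1 (definition of A). Then (Σ_{i≥I} p'_i)^{2-r} ≥ Σ_{i≤I} (p'_i)^r, and consequently (Σ_{i≥I} p'_i)^{(2-t)/t} ≥ (Σ_{i≤I} (p'_i)^r)^{1/(2r)} after raising to the power 1/(2r) with 2-r = 2(2-t)·r/t. -/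
open Real Finset

/-- Index comparison lemma (rescaled case `p' i = n * p i`): when `A < I`,
the tail term dominates the bulk term. Here `r = 2t/(4-t)`. -/
theorem A_and_I (N A I : ℕ) (t r : ℝ) (ht1 : 1 ≤ t) (ht2 : t ≤ 2)
    (hr : r = 2 * t / (4 - t)) (p' : ℕ → ℝ) (c : ℝ) (hc : 1 ≤ c)
    (hmono : ∀ i j, 1 ≤ i → i ≤ j → j ≤ N → p' j ≤ p' i)
    (hnn : ∀ i, 0 ≤ p' i) (hAI : A < I) (hIN : I ≤ N)
    (htail : (∑ i ∈ Icc I N, (p' i) ^ 2) ^ (2 - r) ≥ c)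
    (hAdef : (p' (A + 1)) ^ (2 - r) * ∑ i ∈ Icc 1 I, (p' i) ^ r ≤ 1) :
    (∑ i ∈ Icc I N, p' i) ^ (2 - r) ≥ ∑ i ∈ Icc 1 I, (p' i) ^ r ∧
    (∑ i ∈ Icc I N, p' i) ^ ((2 - t) / t) ≥ (∑ i ∈ Icc 1 I, (p' i) ^ r) ^ (1 / (2 * r)) := by
  set S := ∑ i ∈ Icc I N, p' i with hS
  set T := ∑ i ∈ Icc I N, (p' i) ^ 2 with hT
  set B := ∑ i ∈ Icc 1 I, (p' i) ^ r with hB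
  have ht0 : (0:ℝ) < t := by linarith
  have h4t : (0:ℝ) < 4 - t := by linarith
  have hr_pos : 0 < r := by rw [hr]; positivity
  have hr_le : r ≤ 2 := by rw [hr, div_le_iff₀ h4t]; nlinarith
  have hSnn : 0 ≤ S := Finset.sum_nonneg fun i _ => hnn i
  have hBnn : 0 ≤ B := Finset.sum_nonneg fun i _ => Real.rpow_nonneg (hnn i) r
  have hTnn : 0 ≤ T := Finset.sum_nonneg fun i _ => by positivity
  have hexp : (2 - r) * (1 / (2 * r)) = (2 - t) / t := by
    have hrne : r ≠ 0 := ne_of_gt hr_pos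
    rw [hr] at hrne ⊢
    field_simp
    ring
  have key : S ^ (2 - r) ≥ B := by
    by_cases hr2 : r = 2
    · have hB1 : B ≤ 1 := by
        have := hAdef
        rw [hr2] at this
        simpa using this
      rw [hr2]
      simpa using hB1
    · have h2r : 0 < 2 - r := lt_of_le_of_ne (by linarith) (by intro h; exact hr2 (by linarith))
      have hT1 : 1 ≤ T := by
        by_contra h
        push_neg at h
        have : T ^ (2 - r) < 1 ^ (2 - r) := Real.rpow_lt_rpow hTnn h h2r
        rw [Real.one_rpow] at this
        linarith
      set p := p' (A + 1) with hp
      have hp_pos : 0 < p := by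
        rcases lt_or_eq_of_le (hnn (A + 1)) with h | h
        · exact h
        · exfalso
          have hTz : T = 0 := by
            rw [hT]
            apply Finset.sum_eq_zero
            intro i hi
            simp only [Finset.mem_Icc] at hi
            have h1 : p' i ≤ p := hmono (A + 1) i (Nat.le_add_left 1 A) (le_trans hAI hi.1) hi.2
            have h2 : p' i = 0 := le_antisymm (h1.trans (le_of_eq (hp.trans h.symm))) (hnn i)
            rw [h2]; ring
          rw [hTz] at hT1; linarith
      have hTpS : T ≤ p * S := by
        rw [hT, hS, Finset.mul_sum]
        apply Finset.sum_le_sum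
        intro i hi
        simp only [Finset.mem_Icc] at hi
        have hle : p' i ≤ p := hmono (A + 1) i (Nat.le_add_left 1 A) (le_trans hAI hi.1) hi.2
        have := hnn i
        nlinarith
      have hS1p : 1 / p ≤ S := by
        rw [div_le_iff₀ hp_pos]
        nlinarith
      have hpr : 0 < p ^ (2 - r) := Real.rpow_pos_of_pos hp_pos _
      have hB1p : B ≤ (1 / p) ^ (2 - r) := by
        have h1 : B ≤ 1 / p ^ (2 - r) := by
          rw [le_div_iff₀ hpr]
          linarith [hAdef]
        rw [Real.div_rpow zero_le_one (le_of_lt hp_pos), Real.one_rpow]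
        exact h1
      calc B ≤ (1 / p) ^ (2 - r) := hB1p
        _ ≤ S ^ (2 - r) := Real.rpow_le_rpow (by positivity) hS1p (le_of_lt h2r)
  refine ⟨key, ?_⟩
  have h2rnn : 0 ≤ 1 / (2 * r) := by positivity
  calc B ^ (1 / (2 * r)) ≤ (S ^ (2 - r)) ^ (1 / (2 * r)) :=
        Real.rpow_le_rpow hBnn key h2rnn
    _ = S ^ ((2 - r) * (1 / (2 * r))) := (Real.rpow_mul hSnn _ _).symm
    _ = S ^ ((2 - t) / t) := by rw [hexp]
end

section
/- Let p_1 ≥ ... ≥ p_N ≥ 0, n ≥ 1, t ∈ [1,2], r = 2t/(4-t), b = (4-2t)/(4-t), constants c_A, c_I > 0. Let I = min{J : Σ_{i>J} p_i² ≤ c_I/n²} and A = max{a ≤ I : p_a^{b/2} ≥ c_A/(√n·(Σ_{i≤I} p_i^r)^{1/4})} (with A possibly undefined, in which case take Σ_{i≤A} = 0). If A < I, then Σ_{i>A} p_i² ≤ (c_A⁴ + c_I)/n². -/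
open Real Finset

/-- Lemma `A_and_1_over_n`: the tail beyond the bulk cutoff `A` has small second
moment, `∑_{i>A} p_i² ≤ (c_A⁴ + c_I)/n²`. -/
theorem A_and_one_over_n (N n A I : ℕ) (t r b c_A c_I : ℝ)
    (ht1 : 1 ≤ t) (ht2 : t ≤ 2)
    (hr : r = 2 * t / (4 - t)) (hb : b = (4 - 2 * t) / (4 - t))
    (p : ℕ → ℝ)
    (hmono : ∀ i j, 1 ≤ i → i ≤ j → j ≤ N → p j ≤ p i)
    (hnn : ∀ i, 0 ≤ p i) (hn : 1 ≤ n) (hcA : 0 < c_A) (hcI : 0 < c_I)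
    (hI1 : ∑ i ∈ Icc (I + 1) N, (p i) ^ 2 ≤ c_I / (n : ℝ) ^ 2)
    (hI2 : ∀ J, J < I → ¬ (∑ i ∈ Icc (J + 1) N, (p i) ^ 2 ≤ c_I / (n : ℝ) ^ 2))
    (hAI : A ≤ I) (hIN : I ≤ N)
    (hAmem : 1 ≤ A →
      (p A) ^ (b / 2) ≥ c_A / (Real.sqrt n * (∑ i ∈ Icc 1 I, (p i) ^ r) ^ ((1 : ℝ) / 4)))
    (hAmax : ∀ a, A < a → a ≤ I →
      ¬ ((p a) ^ (b / 2) ≥ c_A / (Real.sqrt n * (∑ i ∈ Icc 1 I, (p i) ^ r) ^ ((1 : ℝ) / 4))))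
    (hAltI : A < I) :
    ∑ i ∈ Icc (A + 1) N, (p i) ^ 2 ≤ (c_A ^ 4 + c_I) / (n : ℝ) ^ 2 := by

  set S := ∑ i ∈ Icc 1 I, (p i) ^ r with hS_def
  have h4t : (0:ℝ) < 4 - t := by linarith
  have hrpos : 0 < r := by rw [hr]; positivity
  have hbr : 2 * b + r = 2 := by rw [hr, hb]; field_simp; ring
  have hSnn : 0 ≤ S := Finset.sum_nonneg fun i _ => Real.rpow_nonneg (hnn i) r
  have hA1 := hAmax (A+1) (Nat.lt_succ_self A) hAltI
  push_neg at hA1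
  have hden : 0 < Real.sqrt n * S ^ ((1:ℝ)/4) := by
    by_contra hc
    push_neg at hc
    have h1 : c_A / (Real.sqrt n * S ^ ((1:ℝ)/4)) ≤ 0 :=
      div_nonpos_of_nonneg_of_nonpos hcA.le hc
    have h0 : 0 ≤ p (A+1) ^ (b/2) := Real.rpow_nonneg (hnn _) _
    linarith
  have hSpos : 0 < S := by
    rcases hSnn.lt_or_eq with h | h
    · exact h
    · exfalso
      rw [← h, Real.zero_rpow (by norm_num : (1:ℝ)/4 ≠ 0), mul_zero] at hden
      exact lt_irrefl 0 hden
  have hnpos : (0:ℝ) < (n:ℝ) := by exact_mod_cast hn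
  have hterm : ∀ i ∈ Icc (A+1) I, (p i)^2 ≤ c_A^4 / ((n:ℝ)^2 * S) * (p i) ^ r := by
    intro i hi
    simp only [Finset.mem_Icc] at hi
    rcases (hnn i).lt_or_eq with hp | hp
    · have hlt := hAmax i hi.1 hi.2
      push_neg at hlt
      have h4 : ((p i) ^ (b/2))^(4:ℕ) < (c_A / (Real.sqrt n * S ^ ((1:ℝ)/4)))^(4:ℕ) :=
        pow_lt_pow_left₀ hlt (Real.rpow_nonneg (hnn i) _) (by norm_num)
      have e1 : ((p i) ^ (b/2))^(4:ℕ) = (p i) ^ (2*b) := by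
        rw [← Real.rpow_natCast ((p i)^(b/2)) 4, ← Real.rpow_mul (hnn i)]
        norm_num
        ring_nf
      have e2 : (c_A / (Real.sqrt n * S ^ ((1:ℝ)/4)))^(4:ℕ) = c_A^4 / ((n:ℝ)^2 * S) := by
        rw [div_pow, mul_pow]
        congr 2
        · rw [show (4:ℕ) = 2*2 from rfl, pow_mul, Real.sq_sqrt (by positivity : (0:ℝ) ≤ (n:ℝ))]
        · rw [← Real.rpow_natCast (S ^ ((1:ℝ)/4)) 4, ← Real.rpow_mul hSnn]
          norm_num
      have e3 : (p i)^2 = (p i)^(2*b) * (p i)^r := by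
        rw [← Real.rpow_add hp, hbr, ← Real.rpow_natCast (p i) 2]
        norm_num
      rw [e3]
      apply mul_le_mul_of_nonneg_right _ (Real.rpow_nonneg (hnn i) r)
      rw [← e1, ← e2]
      exact h4.le
    · rw [← hp]
      simp [Real.zero_rpow hrpos.ne']
  have hsum1 : ∑ i ∈ Icc (A+1) I, (p i)^2 ≤ c_A^4 / (n:ℝ)^2 := by
    calc ∑ i ∈ Icc (A+1) I, (p i)^2
        ≤ ∑ i ∈ Icc (A+1) I, c_A^4 / ((n:ℝ)^2 * S) * (p i)^r := Finset.sum_le_sum hterm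
      _ = c_A^4 / ((n:ℝ)^2 * S) * ∑ i ∈ Icc (A+1) I, (p i)^r := (Finset.mul_sum _ _ _).symm
      _ ≤ c_A^4 / ((n:ℝ)^2 * S) * S := by
          apply mul_le_mul_of_nonneg_left _ (by positivity)
          exact Finset.sum_le_sum_of_subset_of_nonneg
            (Finset.Icc_subset_Icc (by omega) le_rfl)
            (fun i _ _ => Real.rpow_nonneg (hnn i) r)
      _ = c_A^4 / (n:ℝ)^2 := by field_simp
  have hsplit : ∑ i ∈ Icc (A+1) N, (p i)^2
      = ∑ i ∈ Icc (A+1) I, (p i)^2 + ∑ i ∈ Icc (I+1) N, (p i)^2 := by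
    rw [Finset.Icc_add_one_left_eq_Ioc, Finset.Icc_add_one_left_eq_Ioc, Finset.Icc_add_one_left_eq_Ioc,
        (Finset.sum_Ioc_consecutive _ (by omega : A ≤ I) (by omega : I ≤ N)).symm]
  rw [hsplit, add_div]
  linarith
end

section
/- Let q_1,...,q_m ∈ [0,1] and n ≥ 2. The probability that n iid samples from ⊗_j Bernoulli(q_j) have every coordinate total count N_j ∈ {0,1} equals Π_j (1-q_j)^{n-1}(1 + (n-1)q_j), and this is at most exp(-min{ (1/3)·Σ_j (n-1)²q_j², (1/10)·(Σ_j (n-1)²q_j²)^{1/2} }). -/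
open MeasureTheory ProbabilityTheory Finset Real

section CollisionAux

private lemma aux_exp_small {x : ℝ} (hx0 : 0 ≤ x) (hx : x ≤ 1/2) :
    1 + x ≤ Real.exp (x - x^2/3) := by
  have ht : 0 ≤ x - x^2/3 := by nlinarith
  have h := Real.quadratic_le_exp_of_nonneg ht
  nlinarith [mul_nonneg (sq_nonneg x) (show (0:ℝ) ≤ 3 - 6*x by linarith),
    sq_nonneg (x^2), sq_nonneg x]


private lemma aux_exp_big {x : ℝ} (hx : 1/2 ≤ x) :
    1 + x ≤ Real.exp (9*x/10) := by
  have ht : 0 ≤ 9*x/10 := by linarith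
  have h := Real.quadratic_le_exp_of_nonneg ht
  nlinarith


private lemma aux_min_le (a b : ℝ) (ha : 0 ≤ a) (hb : 0 ≤ b) :
    min ((a + b)/3) (Real.sqrt (a + b)/10) ≤ a/3 + Real.sqrt b/10 := by
  rcases le_or_gt b (9/100) with hb' | hb'
  · refine (min_le_left _ _).trans ?_
    have h2 : Real.sqrt b ≤ 3/10 := by
      rw [show (3/10:ℝ) = Real.sqrt ((3/10)^2) from (Real.sqrt_sq (by norm_num)).symm]
      exact Real.sqrt_le_sqrt (by nlinarith)
    have h1 : b ≤ Real.sqrt b * (3/10) := by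
      nlinarith [Real.sq_sqrt hb, Real.sqrt_nonneg b]
    linarith
  · refine (min_le_right _ _).trans ?_
    have h3 : (3/10:ℝ) ≤ Real.sqrt b := by
      rw [show (3/10:ℝ) = Real.sqrt ((3/10)^2) from (Real.sqrt_sq (by norm_num)).symm]
      exact Real.sqrt_le_sqrt (by nlinarith)
    have h4 : Real.sqrt (a+b) ≤ Real.sqrt b + 5*a/3 := by
      have h5 : Real.sqrt (a+b) ≤ Real.sqrt ((Real.sqrt b + 5*a/3)^2) :=
        Real.sqrt_le_sqrt (by nlinarith [Real.sq_sqrt hb, Real.sqrt_nonneg b])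
      rwa [Real.sqrt_sq (by positivity)] at h5
    linarith

private lemma part1 {Ω : Type*} [MeasurableSpace Ω] (μ : Measure Ω) [IsProbabilityMeasure μ]
    (n m : ℕ) (hn : 2 ≤ n) (q : Fin m → ℝ)
    (hq0 : ∀ j, 0 ≤ q j) (hq1 : ∀ j, q j ≤ 1)
    (X : Fin n → Fin m → Ω → ℕ)
    (hmeas : ∀ i j, Measurable (X i j))
    (hindep : iIndepFun (m := fun _ : Fin n × Fin m => (inferInstance : MeasurableSpace ℕ))
      (fun ij => X ij.1 ij.2) μ)
    (hone : ∀ i j, μ {ω | X i j ω = 1} = ENNReal.ofReal (q j))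
    (hzero : ∀ i j, μ {ω | X i j ω = 0} = ENNReal.ofReal (1 - q j)) :
    μ {ω | ∀ j, (∑ i, X i j ω) ≤ 1}
      = ENNReal.ofReal (∏ j, (1 - q j) ^ (n - 1) * (1 + ((n : ℝ) - 1) * q j)) := by
  classical
  have hn0 : (0:ℝ) ≤ (n:ℝ) - 1 := by
    have : (2:ℝ) ≤ (n:ℝ) := by exact_mod_cast hn
    linarith
  have hq1' : ∀ j, 0 ≤ 1 - q j := fun j => by linarith [hq1 j]
  set v : (Fin m → Option (Fin n)) → Fin n → Fin m → ℕ :=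
    fun σ i j => if σ j = some i then 1 else 0 with hv
  -- measurability of each pattern event
  have hEσ_meas : ∀ σ, MeasurableSet {ω | ∀ p : Fin n × Fin m, X p.1 p.2 ω = v σ p.1 p.2} := by
    intro σ
    have h : {ω | ∀ p : Fin n × Fin m, X p.1 p.2 ω = v σ p.1 p.2}
        = ⋂ p : Fin n × Fin m, (X p.1 p.2) ⁻¹' {v σ p.1 p.2} := by
      ext ω; simp [Set.mem_iInter, Set.mem_preimage]
    rw [h]
    exact MeasurableSet.iInter fun p => (hmeas p.1 p.2) (measurableSet_singleton _)
  -- the event decomposes as a disjoint union over patterns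
  have hE : {ω | ∀ j, (∑ i, X i j ω) ≤ 1}
      = ⋃ σ : Fin m → Option (Fin n), {ω | ∀ p : Fin n × Fin m, X p.1 p.2 ω = v σ p.1 p.2} := by
    ext ω
    simp only [Set.mem_setOf_eq, Set.mem_iUnion]
    constructor
    · intro h
      refine ⟨fun j => if h' : ∃ i, X i j ω = 1 then some h'.choose else none, ?_⟩
      rintro ⟨i, j⟩
      have hle : ∀ i', X i' j ω ≤ 1 := fun i' =>
        le_trans (Finset.single_le_sum (f := fun i' => X i' j ω)
          (fun _ _ => Nat.zero_le _) (Finset.mem_univ i')) (h j)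
      simp only [hv]
      by_cases h' : ∃ i', X i' j ω = 1
      · simp only [dif_pos h']
        by_cases hi : h'.choose = i
        · rw [if_pos (by rw [hi])]
          exact hi ▸ h'.choose_spec
        · rw [if_neg (by simpa using hi)]
          by_contra h0
          have h1 : X i j ω = 1 := le_antisymm (hle i) (Nat.one_le_iff_ne_zero.2 h0)
          have h2 : X h'.choose j ω = 1 := h'.choose_spec
          have h3 : 2 ≤ ∑ i', X i' j ω := by
            calc 2 = ∑ i' ∈ ({h'.choose, i} : Finset (Fin n)), X i' j ω := by
                  rw [Finset.sum_pair hi, h1, h2]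
              _ ≤ ∑ i', X i' j ω :=
                  Finset.sum_le_sum_of_subset (Finset.subset_univ _)
          exact absurd (le_trans h3 (h j)) (by norm_num)
      · simp only [dif_neg h', reduceCtorEq, if_false]
        have h4 : X i j ω ≠ 1 := fun hh => h' ⟨i, hh⟩
        have := hle i
        omega
    · rintro ⟨σ, hσ⟩ j
      have hs : ∑ i, X i j ω = ∑ i, v σ i j :=
        Finset.sum_congr rfl fun i _ => hσ (i, j)
      rw [hs]
      simp only [hv]
      cases hσj : σ j with
      | none => simp
      | some i₀ => simp [Finset.sum_ite_eq]
  -- pairwise disjointness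
  have hdisj : Pairwise (Function.onFun Disjoint fun σ : Fin m → Option (Fin n) =>
      {ω | ∀ p : Fin n × Fin m, X p.1 p.2 ω = v σ p.1 p.2}) := by
    intro σ τ hστ
    rw [Function.onFun, Set.disjoint_left]
    intro ω hσ hτ
    apply hστ
    funext j
    have key : ∀ i, v σ i j = v τ i j := fun i => (hσ (i, j)).symm.trans (hτ (i, j))
    rcases hσj : σ j with _ | i <;> rcases hτj : τ j with _ | i'
    · rfl
    · have := key i'; simp [hv, hσj, hτj] at this
    · have := key i; simp [hv, hσj, hτj] at this
    · have h5 := key i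
      simp only [hv, hσj, hτj] at h5
      by_cases hii : i' = i
      · rw [hii]
      · simp [hii] at h5
  -- measure of each pattern event via independence
  have hμσ : ∀ σ : Fin m → Option (Fin n),
      μ {ω | ∀ p : Fin n × Fin m, X p.1 p.2 ω = v σ p.1 p.2}
      = ∏ p : Fin n × Fin m, (if σ p.2 = some p.1 then ENNReal.ofReal (q p.2)
          else ENNReal.ofReal (1 - q p.2)) := by
    intro σ
    have h1 : {ω | ∀ p : Fin n × Fin m, X p.1 p.2 ω = v σ p.1 p.2}
        = ⋂ p ∈ (Finset.univ : Finset (Fin n × Fin m)),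
            (fun ij : Fin n × Fin m => X ij.1 ij.2) p ⁻¹' {v σ p.1 p.2} := by
      ext ω; simp
    have h2 := hindep.measure_inter_preimage_eq_mul (S := Finset.univ)
      (sets := fun p => {v σ p.1 p.2}) (fun p _ => measurableSet_singleton _)
    rw [h1]
    refine h2.trans ?_
    refine Finset.prod_congr rfl fun p _ => ?_
    by_cases hp : σ p.2 = some p.1
    · have hvp : v σ p.1 p.2 = 1 := by simp [hv, hp]
      have hset : (X p.1 p.2) ⁻¹' ((fun p : Fin n × Fin m => ({v σ p.1 p.2} : Set ℕ)) p)
          = {ω | X p.1 p.2 ω = 1} := by ext ω; simp [hvp]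
      rw [hset, if_pos hp]
      exact hone p.1 p.2
    · have hvp : v σ p.1 p.2 = 0 := by simp [hv, hp]
      have hset : (X p.1 p.2) ⁻¹' ((fun p : Fin n × Fin m => ({v σ p.1 p.2} : Set ℕ)) p)
          = {ω | X p.1 p.2 ω = 0} := by ext ω; simp [hvp]
      rw [hset, if_neg hp]
      exact hzero p.1 p.2
  rw [hE, measure_iUnion hdisj hEσ_meas, tsum_fintype]
  -- now a purely combinatorial computation
  calc ∑ σ : Fin m → Option (Fin n),
        μ {ω | ∀ p : Fin n × Fin m, X p.1 p.2 ω = v σ p.1 p.2}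
      = ∑ σ : Fin m → Option (Fin n), ∏ j, ∏ i,
          (if σ j = some i then ENNReal.ofReal (q j) else ENNReal.ofReal (1 - q j)) := by
        refine Finset.sum_congr rfl fun σ _ => ?_
        rw [hμσ σ, Fintype.prod_prod_type]
        exact Finset.prod_comm
    _ = ∏ j, ∑ o : Option (Fin n), ∏ i,
          (if o = some i then ENNReal.ofReal (q j) else ENNReal.ofReal (1 - q j)) := by
        rw [Finset.prod_univ_sum, Fintype.piFinset_univ]
    _ = ∏ j, (ENNReal.ofReal (1 - q j) ^ n
          + n * (ENNReal.ofReal (q j) * ENNReal.ofReal (1 - q j) ^ (n - 1))) := by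
        refine Finset.prod_congr rfl fun j _ => ?_
        rw [Fintype.sum_option]
        congr 1
        · simp [Finset.prod_const, Finset.card_univ]
        · have hterm : ∀ i₀ : Fin n, (∏ i, if (some i₀ : Option (Fin n)) = some i
              then ENNReal.ofReal (q j) else ENNReal.ofReal (1 - q j))
              = ENNReal.ofReal (q j) * ENNReal.ofReal (1 - q j) ^ (n - 1) := by
            intro i₀
            rw [← Finset.mul_prod_erase Finset.univ _ (Finset.mem_univ i₀), if_pos rfl]
            congr 1
            rw [Finset.prod_congr rfl (fun i hi => if_neg (by
              simp only [Finset.mem_erase] at hi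
              simpa using (Ne.symm hi.1))),
              Finset.prod_const, Finset.card_erase_of_mem (Finset.mem_univ i₀),
              Finset.card_univ, Fintype.card_fin]
          rw [Finset.sum_congr rfl fun i₀ _ => hterm i₀, Finset.sum_const,
            Finset.card_univ, Fintype.card_fin, nsmul_eq_mul]
    _ = ENNReal.ofReal (∏ j, (1 - q j) ^ (n - 1) * (1 + ((n : ℝ) - 1) * q j)) := by
        rw [ENNReal.ofReal_prod_of_nonneg (fun j _ => by
          have := mul_nonneg hn0 (hq0 j)
          have := pow_nonneg (hq1' j) (n - 1)
          nlinarith)]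
        refine Finset.prod_congr rfl fun j _ => ?_
        have hexp : (1 - q j) ^ (n - 1) * (1 + ((n : ℝ) - 1) * q j)
            = (1 - q j) ^ n + (n : ℝ) * (q j * (1 - q j) ^ (n - 1)) := by
          have hpow : (1 - q j) ^ n = (1 - q j) ^ (n - 1) * (1 - q j) := by
            conv_lhs => rw [show n = (n - 1) + 1 by omega]
            rw [pow_succ]
          rw [hpow]; ring
        rw [hexp, ENNReal.ofReal_add (pow_nonneg (hq1' j) n)
            (mul_nonneg (Nat.cast_nonneg n) (mul_nonneg (hq0 j) (pow_nonneg (hq1' j) _))),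
          ENNReal.ofReal_pow (hq1' j),
          ENNReal.ofReal_mul (by positivity),
          ENNReal.ofReal_mul (hq0 j),
          ENNReal.ofReal_pow (hq1' j), ENNReal.ofReal_natCast]

private lemma part2 (n m : ℕ) (hn : 2 ≤ n) (q : Fin m → ℝ)
    (hq0 : ∀ j, 0 ≤ q j) (hq1 : ∀ j, q j ≤ 1) :
    ∏ j, (1 - q j) ^ (n - 1) * (1 + ((n : ℝ) - 1) * q j) ≤
      Real.exp (-(min ((1 / 3) * ∑ j, ((n : ℝ) - 1) ^ 2 * q j ^ 2)
        ((1 / 10) * (∑ j, ((n : ℝ) - 1) ^ 2 * q j ^ 2) ^ ((1 : ℝ) / 2)))) := by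
  classical
  have hn0 : (0:ℝ) ≤ (n:ℝ) - 1 := by
    have : (2:ℝ) ≤ (n:ℝ) := by exact_mod_cast hn
    linarith
  have hcast : ((n - 1 : ℕ) : ℝ) = (n : ℝ) - 1 := by
    rw [Nat.cast_sub (by omega)]; norm_num
  have hq1' : ∀ j, 0 ≤ 1 - q j := fun j => by linarith [hq1 j]
  set x : Fin m → ℝ := fun j => ((n:ℝ) - 1) * q j with hxdef
  have hx0 : ∀ j, 0 ≤ x j := fun j => mul_nonneg hn0 (hq0 j)
  set F : Fin m → ℝ := fun j => if x j ≤ 1/2 then -(x j^2/3) else -(x j/10) with hFdef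
  have hfac : ∀ j, (1 - q j) ^ (n - 1) * (1 + ((n : ℝ) - 1) * q j) ≤ Real.exp (F j) := by
    intro j
    have h1 : (1 - q j) ^ (n - 1) ≤ Real.exp (-(x j)) := by
      have he : (1 - q j) ≤ Real.exp (-(q j)) := by
        have := Real.add_one_le_exp (-(q j)); linarith
      calc (1 - q j) ^ (n - 1) ≤ (Real.exp (-(q j))) ^ (n - 1) :=
            pow_le_pow_left₀ (hq1' j) he _
        _ = Real.exp (-(x j)) := by
            rw [← Real.exp_nat_mul]; congr 1
            rw [hcast]; simp only [hxdef]; ring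
    have h2 : 1 + x j ≤ Real.exp (x j + F j) := by
      simp only [hFdef]
      by_cases hc : x j ≤ 1/2
      · rw [if_pos hc, show x j + -(x j^2/3) = x j - x j^2/3 by ring]
        exact aux_exp_small (hx0 j) hc
      · rw [if_neg hc, show x j + -(x j/10) = 9*(x j)/10 by ring]
        exact aux_exp_big (by push_neg at hc; linarith)
    calc (1 - q j) ^ (n - 1) * (1 + ((n : ℝ) - 1) * q j)
        ≤ Real.exp (-(x j)) * (1 + x j) :=
          mul_le_mul_of_nonneg_right h1 (by have := mul_nonneg hn0 (hq0 j); linarith)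
      _ ≤ Real.exp (-(x j)) * Real.exp (x j + F j) :=
          mul_le_mul_of_nonneg_left h2 (Real.exp_pos _).le
      _ = Real.exp (F j) := by rw [← Real.exp_add]; congr 1; ring
  have hprod : ∏ j, (1 - q j) ^ (n - 1) * (1 + ((n : ℝ) - 1) * q j)
      ≤ Real.exp (∑ j, F j) := by
    rw [Real.exp_sum]
    refine Finset.prod_le_prod (fun j _ => ?_) (fun j _ => hfac j)
    have := mul_nonneg hn0 (hq0 j)
    have := pow_nonneg (hq1' j) (n-1)
    nlinarith
  refine hprod.trans (Real.exp_le_exp.2 ?_)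
  -- sum bound
  set A := Finset.univ.filter (fun j => x j ≤ 1/2) with hA
  set B := Finset.univ.filter (fun j => ¬ x j ≤ 1/2) with hB
  set a := ∑ j ∈ A, x j ^ 2 with ha
  set b := ∑ j ∈ B, x j ^ 2 with hb
  have ha0 : 0 ≤ a := Finset.sum_nonneg fun j _ => sq_nonneg _
  have hb0 : 0 ≤ b := Finset.sum_nonneg fun j _ => sq_nonneg _
  have hSx : ∑ j, ((n : ℝ) - 1) ^ 2 * q j ^ 2 = a + b := by
    rw [ha, hb, Finset.sum_filter_add_sum_filter_not]
    exact Finset.sum_congr rfl fun j _ => by simp only [hxdef]; ring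
  have hFsum : ∑ j, F j = -(a/3) + -((∑ j ∈ B, x j)/10) := by
    simp only [hFdef]
    rw [Finset.sum_ite, ← hA, ← hB]
    congr 1
    · rw [Finset.sum_neg_distrib, Finset.sum_div]
    · rw [Finset.sum_neg_distrib, Finset.sum_div]
  have hsqb : Real.sqrt b ≤ ∑ j ∈ B, x j := by
    have h6 : b ≤ (∑ j ∈ B, x j)^2 :=
      Finset.sum_sq_le_sq_sum_of_nonneg (fun j _ => hx0 j)
    calc Real.sqrt b ≤ Real.sqrt ((∑ j ∈ B, x j)^2) := Real.sqrt_le_sqrt h6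
      _ = ∑ j ∈ B, x j := Real.sqrt_sq (Finset.sum_nonneg fun j _ => hx0 j)
  have hkey := aux_min_le a b ha0 hb0
  rw [hFsum, hSx, ← Real.sqrt_eq_rpow]
  have : min ((1/3) * (a+b)) ((1/10) * Real.sqrt (a+b)) = min ((a+b)/3) (Real.sqrt (a+b)/10) := by
    ring_nf
  rw [this]
  linarith

end CollisionAux

/-- The probability that every coordinate count `N_j = ∑_i X_i(j)` is at most 1
equals `∏_j (1-q_j)^{n-1}(1+(n-1)q_j)`, and this product is bounded by
`exp(-min{(1/3)∑ (n-1)²q_j², (1/10)(∑ (n-1)²q_j²)^{1/2}})`. -/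
theorem collision_test_acceptance
    {Ω : Type*} [MeasurableSpace Ω] (μ : Measure Ω) [IsProbabilityMeasure μ]
    (n m : ℕ) (hn : 2 ≤ n) (q : Fin m → ℝ)
    (hq0 : ∀ j, 0 ≤ q j) (hq1 : ∀ j, q j ≤ 1)
    (X : Fin n → Fin m → Ω → ℕ)
    (hmeas : ∀ i j, Measurable (X i j))
    (hindep : iIndepFun (m := fun _ : Fin n × Fin m => (inferInstance : MeasurableSpace ℕ))
      (fun ij => X ij.1 ij.2) μ)
    (hone : ∀ i j, μ {ω | X i j ω = 1} = ENNReal.ofReal (q j))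
    (hzero : ∀ i j, μ {ω | X i j ω = 0} = ENNReal.ofReal (1 - q j)) :
    μ {ω | ∀ j, (∑ i, X i j ω) ≤ 1}
      = ENNReal.ofReal (∏ j, (1 - q j) ^ (n - 1) * (1 + ((n : ℝ) - 1) * q j)) ∧
    ∏ j, (1 - q j) ^ (n - 1) * (1 + ((n : ℝ) - 1) * q j) ≤
      Real.exp (-(min ((1 / 3) * ∑ j, ((n : ℝ) - 1) ^ 2 * q j ^ 2)
        ((1 / 10) * (∑ j, ((n : ℝ) - 1) ^ 2 * q j ^ 2) ^ ((1 : ℝ) / 2)))) := by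
  exact ⟨part1 μ n m hn q hq0 hq1 X hmeas hindep hone hzero, part2 n m hn q hq0 hq1⟩
end
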